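/- Under the beta model, Tweedie's formula yields E[p | p̃] = p̃ + γ(g*(p̃) + 1 - 2p̃), where g*(p̃) = p̃(1-p̃) f'(p̃)/f(p̃) and f is the marginal density of p̃. -/

import Mathlib

open MeasureTheory
open Set

section TweedieAux

lemma tw_kernel_integrableOn {a b : ℝ} (ha : -1 < a) (hb : -1 < b) :
    IntegrableOn (fun x : ℝ => x ^ a * (1 - x) ^ b) (Set.Ioo 0 1) := by
  have h1 : IntervalIntegrable (fun x : ℝ => x ^ a * (1 - x) ^ b) volume 0 (1/2) := by
    apply (intervalIntegral.intervalIntegrable_rpow' ha).mul_continuousOn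
    apply ContinuousOn.rpow_const (by fun_prop)
    intro x hx
    rw [Set.uIcc_of_le (by norm_num)] at hx
    left
    have := hx.2
    intro hcon
    nlinarith
  have h2 : IntervalIntegrable (fun x : ℝ => x ^ a * (1 - x) ^ b) volume (1/2) 1 := by
    have hbase : IntervalIntegrable (fun x : ℝ => (1 - x) ^ b) volume (1/2) 1 := by
      have := (intervalIntegral.intervalIntegrable_rpow' (a := 0) (b := 1/2) hb).comp_sub_left 1
      norm_num at this
      exact this.symm
    apply hbase.continuousOn_mul
    apply ContinuousOn.rpow_const (by fun_prop)
    intro x hx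
    rw [Set.uIcc_of_le (by norm_num)] at hx
    left
    have := hx.1
    intro hcon
    nlinarith
  have h3 : IntervalIntegrable (fun x : ℝ => x ^ a * (1 - x) ^ b) volume 0 1 := h1.trans h2
  rw [intervalIntegrable_iff, Set.uIoc_of_le (by norm_num)] at h3
  exact h3.mono_set Set.Ioo_subset_Ioc_self

lemma tw_B_lb {γ : ℝ} (hγ : 0 < γ) {p : ℝ} (hp : p ∈ Set.Ioo (0:ℝ) 1) :
    (1/2) * ((1/4:ℝ) ^ (1/γ) * (1/4:ℝ) ^ (1/γ))
      ≤ ∫ x in Set.Ioo (0:ℝ) 1, x ^ (p / γ - 1) * (1 - x) ^ ((1 - p) / γ - 1) := by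
  have hint : IntegrableOn (fun x : ℝ => x ^ (p/γ - 1) * (1 - x) ^ ((1-p)/γ - 1))
      (Set.Ioo 0 1) := by
    apply tw_kernel_integrableOn
    · have : 0 < p / γ := div_pos hp.1 hγ
      linarith
    · have : 0 < (1 - p) / γ := div_pos (by linarith [hp.2]) hγ
      linarith
  have hstep1 : ∫ x in Set.Ioo (1/4 : ℝ) (3/4), x ^ (p/γ - 1) * (1 - x) ^ ((1-p)/γ - 1)
      ≤ ∫ x in Set.Ioo (0:ℝ) 1, x ^ (p/γ - 1) * (1 - x) ^ ((1-p)/γ - 1) := by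
    apply setIntegral_mono_set hint
    · filter_upwards [ae_restrict_mem measurableSet_Ioo] with x hx
      have h1 : (0:ℝ) < x := hx.1
      have h2 : x < 1 := hx.2
      exact le_of_lt (mul_pos (Real.rpow_pos_of_pos h1 _)
        (Real.rpow_pos_of_pos (by linarith) _))
    · apply HasSubset.Subset.eventuallyLE
      intro x hx
      constructor <;> [linarith [hx.1]; linarith [hx.2]]
  refine le_trans ?_ hstep1
  have hstep2 : ∫ _x in Set.Ioo (1/4 : ℝ) (3/4), ((1/4:ℝ) ^ (1/γ) * (1/4:ℝ) ^ (1/γ))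
      ≤ ∫ x in Set.Ioo (1/4 : ℝ) (3/4), x ^ (p/γ - 1) * (1 - x) ^ ((1-p)/γ - 1) := by
    apply setIntegral_mono_on
    · exact integrableOn_const (by simp [Real.volume_Ioo])
    · apply hint.mono_set
      intro x hx
      exact ⟨by linarith [hx.1], by linarith [hx.2]⟩
    · exact measurableSet_Ioo
    · intro x hx
      have hx1 : (1/4:ℝ) < x := hx.1
      have hx2 : x < 3/4 := hx.2
      have hxpos : (0:ℝ) < x := by linarith
      have hx1' : (0:ℝ) < 1 - x := by linarith
      have hpg : p / γ ≤ 1 / γ := (div_le_div_iff_of_pos_right hγ).mpr hp.2.le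
      have hpg' : (1 - p) / γ ≤ 1 / γ := (div_le_div_iff_of_pos_right hγ).mpr (by linarith [hp.1])
      have e1 : (1/4:ℝ) ^ (1/γ) ≤ x ^ (p/γ - 1) := by
        calc (1/4:ℝ) ^ (1/γ) ≤ x ^ (1/γ) :=
              Real.rpow_le_rpow (by norm_num) (by linarith) (by positivity)
          _ ≤ x ^ (p/γ - 1) :=
              Real.rpow_le_rpow_of_exponent_ge hxpos (by linarith) (by linarith)
      have e2 : (1/4:ℝ) ^ (1/γ) ≤ (1 - x) ^ ((1-p)/γ - 1) := by
        calc (1/4:ℝ) ^ (1/γ) ≤ (1 - x) ^ (1/γ) :=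
              Real.rpow_le_rpow (by norm_num) (by linarith) (by positivity)
          _ ≤ (1 - x) ^ ((1-p)/γ - 1) :=
              Real.rpow_le_rpow_of_exponent_ge hx1' (by linarith) (by linarith)
      exact mul_le_mul e1 e2 (by positivity) (le_of_lt (Real.rpow_pos_of_pos hxpos _))
  refine le_trans (le_of_eq ?_) hstep2
  rw [setIntegral_const, measureReal_def, Real.volume_Ioo]
  rw [ENNReal.toReal_ofReal (by norm_num)]
  norm_num

lemma tw_rpow_le {δ s e : ℝ} (hδ : 0 < δ) (hs1 : δ ≤ s) (hs2 : s ≤ 1) (he : -2 ≤ e) :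
    s ^ e ≤ δ⁻¹ * δ⁻¹ := by
  have hs0 : 0 < s := lt_of_lt_of_le hδ hs1
  calc s ^ e ≤ s ^ (-2 : ℝ) := Real.rpow_le_rpow_of_exponent_ge hs0 hs2 he
    _ = (s * s)⁻¹ := by
        rw [Real.rpow_neg hs0.le, show (2:ℝ) = ((2:ℕ):ℝ) by norm_num, Real.rpow_natCast, sq]
    _ ≤ (δ * δ)⁻¹ := by
        apply inv_anti₀ (by positivity)
        exact mul_le_mul hs1 hs1 hδ.le hs0.le
    _ = δ⁻¹ * δ⁻¹ := by rw [mul_inv]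

lemma tw_hasDerivAt {A Bb s : ℝ} (hs0 : 0 < s) (hs1 : s < 1) :
    HasDerivAt (fun u : ℝ => u ^ A * (1 - u) ^ Bb)
      (A * s ^ (A - 1) * (1 - s) ^ Bb - Bb * s ^ A * (1 - s) ^ (Bb - 1)) s := by
  have h1 : HasDerivAt (fun u : ℝ => u ^ A) (A * s ^ (A - 1)) s :=
    Real.hasDerivAt_rpow_const (Or.inl hs0.ne')
  have h2 : HasDerivAt (fun u : ℝ => (1 - u) ^ Bb) (-(Bb * (1 - s) ^ (Bb - 1))) s := by
    have hinner : HasDerivAt (fun u : ℝ => 1 - u) (-1) s := by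
      simpa using (hasDerivAt_id s).const_sub (1:ℝ)
    have houter : HasDerivAt (fun v : ℝ => v ^ Bb) (Bb * (1 - s) ^ (Bb - 1)) (1 - s) :=
      Real.hasDerivAt_rpow_const (Or.inl (by linarith))
    have := houter.comp s hinner
    simpa [mul_comm, Function.comp_def] using this
  have := h1.mul h2
  exact this.congr_deriv (by ring)


lemma tw_meas_pow {s : ℝ} (hs : 0 < s) {e : ℝ → ℝ} (he : Measurable e) :
    Measurable fun p : ℝ => s ^ (e p) := by
  rw [show (fun p : ℝ => s ^ (e p)) = fun p => Real.exp (Real.log s * e p) from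
    funext fun p => Real.rpow_def_of_pos hs _]
  exact (measurable_const.mul he).exp

/-- The integrand of the marginal density. -/
noncomputable def twF (γ : ℝ) (B h : ℝ → ℝ) (s p : ℝ) : ℝ :=
  s ^ (p / γ - 1) * (1 - s) ^ ((1 - p) / γ - 1) / B p * h p

/-- Its pointwise derivative in `s`. -/
noncomputable def twF' (γ : ℝ) (B h : ℝ → ℝ) (s p : ℝ) : ℝ :=
  ((p / γ - 1) * s ^ (p / γ - 1 - 1) * (1 - s) ^ ((1 - p) / γ - 1)
    - ((1 - p) / γ - 1) * s ^ (p / γ - 1) * (1 - s) ^ ((1 - p) / γ - 1 - 1)) / B p * h p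

lemma tw_main {γ : ℝ} (hγ : 0 < γ) {B h : ℝ → ℝ} {c₀ M : ℝ} (hc₀ : 0 < c₀)
    (hBmeas : Measurable B) (hBlb : ∀ p ∈ Set.Ioo (0:ℝ) 1, c₀ ≤ B p)
    (hh_nonneg : ∀ x, 0 ≤ h x) (hM : ∀ x, h x ≤ M)
    {t : ℝ} (ht0 : 0 < t) (ht1 : t < 1)
    (hint : Integrable (twF γ B h t) (volume.restrict (Set.Ioo 0 1))) :
    Integrable (twF' γ B h t) (volume.restrict (Set.Ioo 0 1)) ∧
    HasDerivAt (fun s => ∫ p in Set.Ioo (0:ℝ) 1, twF γ B h s p)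
      (∫ p in Set.Ioo (0:ℝ) 1, twF' γ B h t p) t := by
  have hM0 : 0 ≤ M := (hh_nonneg 0).trans (hM 0)
  have hBpos : ∀ p ∈ Set.Ioo (0:ℝ) 1, 0 < B p := fun p hp => lt_of_lt_of_le hc₀ (hBlb p hp)
  have ht1' : (0:ℝ) < 1 - t := by linarith
  set δ : ℝ := min t (1 - t) / 2 with hδdef
  have hδ : 0 < δ := div_pos (lt_min ht0 ht1') two_pos
  have hmin1 : min t (1 - t) ≤ t := min_le_left _ _
  have hmin2 : min t (1 - t) ≤ 1 - t := min_le_right _ _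
  have hball : ∀ s ∈ Metric.ball t δ, δ ≤ s ∧ s ≤ 1 - δ := by
    intro s hs
    rw [Metric.mem_ball, Real.dist_eq, abs_lt] at hs
    constructor
    · linarith [hs.1]
    · linarith [hs.2]
  -- measurability of the kernel in `p` for fixed base in (0,1)
  have hKmeas : ∀ s : ℝ, 0 < s → s < 1 →
      Measurable fun p : ℝ => s ^ (p / γ - 1) * (1 - s) ^ ((1 - p) / γ - 1) := by
    intro s hs0 hs1
    exact (tw_meas_pow hs0 (by fun_prop)).mul (tw_meas_pow (by linarith) (by fun_prop))
  have hKtpos : ∀ p : ℝ, 0 < t ^ (p / γ - 1) * (1 - t) ^ ((1 - p) / γ - 1) :=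
    fun p => mul_pos (Real.rpow_pos_of_pos ht0 _) (Real.rpow_pos_of_pos ht1' _)
  -- h is a.e. strongly measurable on (0,1)
  have hhmeas : AEStronglyMeasurable h (volume.restrict (Set.Ioo 0 1)) := by
    have hmeq : (fun p => twF γ B h t p *
        (B p / (t ^ (p / γ - 1) * (1 - t) ^ ((1 - p) / γ - 1))))
        =ᵐ[volume.restrict (Set.Ioo 0 1)] h := by
      filter_upwards [ae_restrict_mem measurableSet_Ioo] with p hp
      have h1 := (hKtpos p).ne'
      have h2 := (hBpos p hp).ne'
      simp only [twF]
      field_simp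
    exact AEStronglyMeasurable.congr
      (hint.aestronglyMeasurable.mul
        ((hBmeas.div (hKmeas t ht0 ht1)).aestronglyMeasurable)) hmeq
  -- measurability of F s for s near t
  have hmeasF : ∀ᶠ s in nhds t,
      AEStronglyMeasurable (twF γ B h s) (volume.restrict (Set.Ioo 0 1)) := by
    filter_upwards [isOpen_Ioo.mem_nhds (Set.mem_Ioo.mpr ⟨ht0, ht1⟩)] with s hs
    exact AEStronglyMeasurable.mul
      (((hKmeas s hs.1 hs.2).div hBmeas).aestronglyMeasurable) hhmeas
  -- measurability of F' t
  have hF'meas : AEStronglyMeasurable (twF' γ B h t) (volume.restrict (Set.Ioo 0 1)) := by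
    have hnum : Measurable fun p : ℝ =>
        ((p / γ - 1) * t ^ (p / γ - 1 - 1) * (1 - t) ^ ((1 - p) / γ - 1)
          - ((1 - p) / γ - 1) * t ^ (p / γ - 1) * (1 - t) ^ ((1 - p) / γ - 1 - 1)) := by
      apply Measurable.sub
      · exact (((by fun_prop : Measurable fun p : ℝ => p / γ - 1).mul
          (tw_meas_pow ht0 (by fun_prop)))).mul (tw_meas_pow ht1' (by fun_prop))
      · exact (((by fun_prop : Measurable fun p : ℝ => (1 - p) / γ - 1).mul
          (tw_meas_pow ht0 (by fun_prop)))).mul (tw_meas_pow ht1' (by fun_prop))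
    exact AEStronglyMeasurable.mul ((hnum.div hBmeas).aestronglyMeasurable) hhmeas
  -- the uniform bound
  have h_bound : ∀ᵐ p ∂(volume.restrict (Set.Ioo (0:ℝ) 1)), ∀ s ∈ Metric.ball t δ,
      ‖twF' γ B h s p‖ ≤ 2 * (1/γ + 1) * ((δ⁻¹ * δ⁻¹) * (δ⁻¹ * δ⁻¹)) * (M / c₀) := by
    filter_upwards [ae_restrict_mem measurableSet_Ioo] with p hp s hs
    obtain ⟨hs1, hs2⟩ := hball s hs
    have hs0 : 0 < s := lt_of_lt_of_le hδ hs1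
    have hs0' : 0 < 1 - s := by linarith
    have hsle : s ≤ 1 := by linarith
    have hsle' : 1 - s ≤ 1 := by linarith
    have hs1' : δ ≤ 1 - s := by linarith
    have hp0 : 0 < p := hp.1
    have hp1 : p < 1 := hp.2
    have hpγ : p / γ ≤ 1 / γ := (div_le_div_iff_of_pos_right hγ).mpr hp1.le
    have hpγ' : (1 - p) / γ ≤ 1 / γ := (div_le_div_iff_of_pos_right hγ).mpr (by linarith)
    have hγ0 : 0 ≤ 1 / γ := by positivity
    have hq1 : 0 ≤ p / γ := by positivity
    have hq2 : 0 ≤ (1 - p) / γ := div_nonneg (by linarith) hγ.le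
    have hiδ : 0 ≤ δ⁻¹ * δ⁻¹ := by positivity
    have hA : |p / γ - 1| ≤ 1/γ + 1 := abs_le.mpr ⟨by linarith, by linarith⟩
    have hBb : |(1 - p) / γ - 1| ≤ 1/γ + 1 := abs_le.mpr ⟨by linarith, by linarith⟩
    have b1 : |(p / γ - 1) * s ^ (p / γ - 1 - 1) * (1 - s) ^ ((1 - p) / γ - 1)|
        ≤ (1/γ + 1) * (δ⁻¹ * δ⁻¹) * (δ⁻¹ * δ⁻¹) := by
      rw [abs_mul, abs_mul,
        abs_of_pos (Real.rpow_pos_of_pos hs0 _), abs_of_pos (Real.rpow_pos_of_pos hs0' _)]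
      apply mul_le_mul _ (tw_rpow_le hδ hs1' hsle' (by linarith)) (Real.rpow_pos_of_pos hs0' _).le
        (by positivity)
      exact mul_le_mul hA (tw_rpow_le hδ hs1 hsle (by linarith)) (Real.rpow_pos_of_pos hs0 _).le
        (by linarith)
    have b2 : |((1 - p) / γ - 1) * s ^ (p / γ - 1) * (1 - s) ^ ((1 - p) / γ - 1 - 1)|
        ≤ (1/γ + 1) * (δ⁻¹ * δ⁻¹) * (δ⁻¹ * δ⁻¹) := by
      rw [abs_mul, abs_mul,
        abs_of_pos (Real.rpow_pos_of_pos hs0 _), abs_of_pos (Real.rpow_pos_of_pos hs0' _)]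
      apply mul_le_mul _ (tw_rpow_le hδ hs1' hsle' (by linarith)) (Real.rpow_pos_of_pos hs0' _).le
        (by positivity)
      exact mul_le_mul hBb (tw_rpow_le hδ hs1 hsle (by linarith)) (Real.rpow_pos_of_pos hs0 _).le
        (by linarith)
    have hnum : |(p / γ - 1) * s ^ (p / γ - 1 - 1) * (1 - s) ^ ((1 - p) / γ - 1)
        - ((1 - p) / γ - 1) * s ^ (p / γ - 1) * (1 - s) ^ ((1 - p) / γ - 1 - 1)|
        ≤ 2 * (1/γ + 1) * ((δ⁻¹ * δ⁻¹) * (δ⁻¹ * δ⁻¹)) := by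
      calc _ ≤ |(p / γ - 1) * s ^ (p / γ - 1 - 1) * (1 - s) ^ ((1 - p) / γ - 1)|
          + |((1 - p) / γ - 1) * s ^ (p / γ - 1) * (1 - s) ^ ((1 - p) / γ - 1 - 1)| :=
            abs_sub _ _
        _ ≤ 2 * (1/γ + 1) * ((δ⁻¹ * δ⁻¹) * (δ⁻¹ * δ⁻¹)) := by
            have := b1; have := b2; nlinarith [b1, b2]
    have hhB : h p / B p ≤ M / c₀ := div_le_div₀ hM0 (hM p) hc₀ (hBlb p hp)
    have : ‖twF' γ B h s p‖
        = |(p / γ - 1) * s ^ (p / γ - 1 - 1) * (1 - s) ^ ((1 - p) / γ - 1)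
          - ((1 - p) / γ - 1) * s ^ (p / γ - 1) * (1 - s) ^ ((1 - p) / γ - 1 - 1)|
          * (h p / B p) := by
      simp only [twF', Real.norm_eq_abs, abs_mul, abs_div]
      rw [abs_of_pos (hBpos p hp), abs_of_nonneg (hh_nonneg p)]
      ring
    rw [this]
    apply mul_le_mul hnum hhB (div_nonneg (hh_nonneg p) (hBpos p hp).le)
      (by positivity)
  -- integrability of the bound
  have hbd_int : Integrable (fun _ : ℝ => 2 * (1/γ + 1) * ((δ⁻¹ * δ⁻¹) * (δ⁻¹ * δ⁻¹)) * (M / c₀))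
      (volume.restrict (Set.Ioo (0:ℝ) 1)) := by
    apply integrable_const_iff.mpr
    right
    rw [isFiniteMeasure_restrict, Real.volume_Ioo]
    exact ENNReal.ofReal_ne_top
  -- differentiability
  have h_diff : ∀ᵐ p ∂(volume.restrict (Set.Ioo (0:ℝ) 1)), ∀ s ∈ Metric.ball t δ,
      HasDerivAt (fun u => twF γ B h u p) (twF' γ B h s p) s := by
    refine Filter.Eventually.of_forall (fun p s hs => ?_)
    obtain ⟨hs1, hs2⟩ := hball s hs
    have hs0 : 0 < s := lt_of_lt_of_le hδ hs1
    have hs1' : s < 1 := by linarith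
    have := ((tw_hasDerivAt (A := p/γ - 1) (Bb := (1-p)/γ - 1) hs0 hs1').div_const
      (B p)).mul_const (h p)
    simpa only [twF, twF'] using this
  exact hasDerivAt_integral_of_dominated_loc_of_deriv_le (Metric.ball_mem_nhds t hδ) hmeasF hint hF'meas h_bound
    hbd_int h_diff

end TweedieAux


lemma tw_B_measurable {γ : ℝ} (hγ : 0 < γ) {B : ℝ → ℝ}
    (hB : ∀ pr, B pr = ∫ x in Set.Ioo (0 : ℝ) 1,
      x ^ (pr / γ - 1) * (1 - x) ^ ((1 - pr) / γ - 1)) :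
    Measurable B := by
  have he : Measurable fun q : ℝ × ℝ =>
      Real.exp (Real.log q.2 * (q.1 / γ - 1)) *
        Real.exp (Real.log (1 - q.2) * ((1 - q.1) / γ - 1)) :=
    (((Real.measurable_log.comp measurable_snd).mul
        ((measurable_fst.div_const γ).sub_const 1)).exp).mul
      (((Real.measurable_log.comp (measurable_const.sub measurable_snd)).mul
        (((measurable_const.sub measurable_fst).div_const γ).sub_const 1)).exp)
  have hmain : Measurable fun p : ℝ => ∫ x in Set.Ioo (0:ℝ) 1,
      Real.exp (Real.log x * (p / γ - 1)) * Real.exp (Real.log (1 - x) * ((1 - p) / γ - 1)) :=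
    (he.stronglyMeasurable.integral_prod_right').measurable
  have hBeq : B = fun p => ∫ x in Set.Ioo (0:ℝ) 1,
      Real.exp (Real.log x * (p / γ - 1)) * Real.exp (Real.log (1 - x) * ((1 - p) / γ - 1)) := by
    funext p
    rw [hB]
    apply setIntegral_congr_fun measurableSet_Ioo
    intro x hx
    dsimp only
    rw [Real.rpow_def_of_pos hx.1, Real.rpow_def_of_pos (by linarith [hx.2] : (0:ℝ) < 1 - x)]
  rw [hBeq]; exact hmain


/-- Tweedie mean formula under the beta model:
`E[p | p̃] = p̃ + γ(g*(p̃) + 1 - 2p̃)` where `g*(p̃) = p̃(1-p̃) f'(p̃)/f(p̃)`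
and `f` is the marginal density of `p̃`. -/
theorem tweedie_mean (γ : ℝ) (hγ : 0 < γ) (h : ℝ → ℝ)
    (hh_nonneg : ∀ x, 0 ≤ h x) (hh_bdd : ∃ M, ∀ x, h x ≤ M)
    (hh_density : ∫ x in Set.Icc (0 : ℝ) 1, h x = 1)
    (B : ℝ → ℝ)
    (hB : ∀ pr, B pr = ∫ x in Set.Ioo (0 : ℝ) 1,
      x ^ (pr / γ - 1) * (1 - x) ^ ((1 - pr) / γ - 1))
    (f : ℝ → ℝ)
    (hf : ∀ t, f t = ∫ pr in Set.Ioo (0 : ℝ) 1,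
      t ^ (pr / γ - 1) * (1 - t) ^ ((1 - pr) / γ - 1) / B pr * h pr)
    (g : ℝ → ℝ)
    (hg : ∀ t, g t = t * (1 - t) * deriv f t / f t) :
    ∀ t ∈ Set.Ioo (0 : ℝ) 1, f t ≠ 0 →
      (∫ pr in Set.Ioo (0 : ℝ) 1,
          pr * (t ^ (pr / γ - 1) * (1 - t) ^ ((1 - pr) / γ - 1) / B pr) * h pr)
        / f t
      = t + γ * (g t + 1 - 2 * t) := by
  intro t ht hft
  obtain ⟨M, hM⟩ := hh_bdd
  have ht0 : (0:ℝ) < t := ht.1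
  have ht1 : t < 1 := ht.2
  have ht1' : (0:ℝ) < 1 - t := by linarith
  have hγ' : γ ≠ 0 := hγ.ne'
  -- lower bound on B
  have hc₀ : 0 < (1/2) * ((1/4:ℝ) ^ (1/γ) * (1/4:ℝ) ^ (1/γ)) := by
    have h4 : (0:ℝ) < (1/4:ℝ) ^ (1/γ) := Real.rpow_pos_of_pos (by norm_num) _
    positivity
  have hBlb : ∀ p ∈ Set.Ioo (0:ℝ) 1,
      (1/2) * ((1/4:ℝ) ^ (1/γ) * (1/4:ℝ) ^ (1/γ)) ≤ B p := by
    intro p hp; rw [hB]; exact tw_B_lb hγ hp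
  have hBpos : ∀ p ∈ Set.Ioo (0:ℝ) 1, 0 < B p :=
    fun p hp => lt_of_lt_of_le hc₀ (hBlb p hp)
  have hBmeas : Measurable B := tw_B_measurable hγ hB
  -- integrability of the integrand of f at t
  have hψint : Integrable (twF γ B h t) (volume.restrict (Set.Ioo 0 1)) := by
    by_contra hcon
    exact hft (by rw [hf t]; exact integral_undef hcon)
  obtain ⟨hF'int, hderiv⟩ := tw_main hγ hc₀ hBmeas hBlb hh_nonneg hM ht0 ht1 hψint
  have hfeq : f = fun s => ∫ p in Set.Ioo (0:ℝ) 1, twF γ B h s p := funext hf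
  have hD : deriv f t = ∫ p in Set.Ioo (0:ℝ) 1, twF' γ B h t p := by
    rw [hfeq]; exact hderiv.deriv
  have htne : t ≠ 0 := ht0.ne'
  have htne' : (1:ℝ) - t ≠ 0 := ht1'.ne'
  have ha : γ * t * (1 - t) ≠ 0 := by positivity
  -- pointwise algebraic identity
  have key : ∀ᵐ p ∂(volume.restrict (Set.Ioo (0:ℝ) 1)),
      twF' γ B h t p = (γ * t * (1 - t))⁻¹ *
        (p * twF γ B h t p + (γ * (2 * t - 1) - t) * twF γ B h t p) := by
    filter_upwards [ae_restrict_mem measurableSet_Ioo] with p hp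
    have hBne := (hBpos p hp).ne'
    have e1 : t ^ (p / γ - 1 - 1) = t ^ (p / γ - 1) / t := by
      rw [Real.rpow_sub ht0, Real.rpow_one]
    have e2 : (1 - t) ^ ((1 - p) / γ - 1 - 1) = (1 - t) ^ ((1 - p) / γ - 1) / (1 - t) := by
      rw [Real.rpow_sub ht1', Real.rpow_one]
    simp only [twF, twF', e1, e2]
    field_simp
    ring
  -- integrability of p * ψ p
  have hNint : Integrable (fun p => p * twF γ B h t p) (volume.restrict (Ioo 0 1)) := by
    apply hψint.bdd_mul (c := 1) aestronglyMeasurable_id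
    filter_upwards [ae_restrict_mem measurableSet_Ioo] with p hp
    simpa [Real.norm_eq_abs, abs_of_pos hp.1] using hp.2.le
  have hfteq : (∫ p in Set.Ioo (0:ℝ) 1, twF γ B h t p) = f t := (hf t).symm
  have hsum : (∫ p in Set.Ioo (0:ℝ) 1, twF' γ B h t p)
      = (γ * t * (1 - t))⁻¹ * ∫ p in Set.Ioo (0:ℝ) 1,
          (p * twF γ B h t p + (γ * (2 * t - 1) - t) * twF γ B h t p) := by
    rw [integral_congr_ae key, integral_const_mul]
  have hsplit : (∫ p in Set.Ioo (0:ℝ) 1,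
        (p * twF γ B h t p + (γ * (2 * t - 1) - t) * twF γ B h t p))
      = (∫ p in Set.Ioo (0:ℝ) 1, p * twF γ B h t p) + (γ * (2 * t - 1) - t) * f t := by
    rw [integral_add hNint (hψint.const_mul _), integral_const_mul, hfteq]
  have hNeq : (∫ pr in Set.Ioo (0:ℝ) 1,
      pr * (t ^ (pr / γ - 1) * (1 - t) ^ ((1 - pr) / γ - 1) / B pr) * h pr)
      = ∫ p in Set.Ioo (0:ℝ) 1, p * twF γ B h t p := by
    simp only [twF, mul_assoc]
  have hN : (∫ p in Set.Ioo (0:ℝ) 1, p * twF γ B h t p)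
      = γ * t * (1 - t) * deriv f t - (γ * (2 * t - 1) - t) * f t := by
    have hJ : γ * t * (1 - t) * deriv f t
        = (∫ p in Set.Ioo (0:ℝ) 1, p * twF γ B h t p) + (γ * (2 * t - 1) - t) * f t := by
      rw [hD, hsum, ← mul_assoc, mul_inv_cancel₀ ha, one_mul, hsplit]
    linarith
  rw [hNeq, hg t, hN]
  field_simp
  ring
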